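/- For all a, b ∈ {1,2,3}, the matrix identity P_a · Had^{⊗4} · P_b = M[a,b] · v_a v_b† holds in the 16×16 complex matrices, where Had^{⊗4} is the fourfold Kronecker power of the Hadamard matrix and v_a v_b† is the outer product of v_a and v_b. -/

import Mathlib

open Matrix

/-- The pattern sets `S₁ = {0000, 1111}`, `S₂ = {0011, 1100}`, `S₃ = {0110, 1001}`
(indexed here by `Fin 3`). -/
def patS : Fin 3 → Finset (Fin 4 → Fin 2)
  | 0 => {![0, 0, 0, 0], ![1, 1, 1, 1]}
  | 1 => {![0, 0, 1, 1], ![1, 1, 0, 0]}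
  | 2 => {![0, 1, 1, 0], ![1, 0, 0, 1]}

/-- The standard basis vector `|s⟩` of `ℂ^{16} ≅ (ℂ²)^{⊗4}`, basis indexed by
bit-strings `s ∈ {0,1}⁴`. -/
def ket (s : Fin 4 → Fin 2) : (Fin 4 → Fin 2) → ℂ := fun t => if t = s then 1 else 0

/-- `v_a = Σ_{s ∈ S_a} |s⟩`. -/
noncomputable def vvec (a : Fin 3) : (Fin 4 → Fin 2) → ℂ := ∑ s ∈ patS a, ket s

/-- `P_a = Σ_{s ∈ S_a} |s⟩⟨s|`, the orthogonal projection onto `span{|s⟩ : s ∈ S_a}`. -/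
noncomputable def Pproj (a : Fin 3) : Matrix (Fin 4 → Fin 2) (Fin 4 → Fin 2) ℂ :=
  ∑ s ∈ patS a, Matrix.vecMulVec (ket s) (ket s)

/-- The fourfold Kronecker power `Had^{⊗4}` of the Hadamard matrix
`(1/√2)·[[1,1],[1,−1]]`, as a 16×16 matrix indexed by bit-strings:
`(Had^{⊗4})_{s,t} = ∏_{i=1}^4 Had_{sᵢ,tᵢ}`. -/
noncomputable def HadPow4 : Matrix (Fin 4 → Fin 2) (Fin 4 → Fin 2) ℂ :=
  fun s t => ∏ i : Fin 4, (((1 / Real.sqrt 2 : ℝ) : ℂ) • !![(1 : ℂ), 1; 1, -1]) (s i) (t i)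

/-- The 3×3 matrix `M = (1/4)·[[1,1,1],[1,1,−1],[1,−1,1]]`. -/
noncomputable def Mmat : Matrix (Fin 3) (Fin 3) ℝ := (1 / 4 : ℝ) • !![1, 1, 1; 1, 1, -1; 1, -1, 1]

lemma vvec_apply (a : Fin 3) (s : Fin 4 → Fin 2) :
    vvec a s = if s ∈ patS a then 1 else 0 := by
  simp [vvec, ket, Finset.sum_apply, Finset.sum_ite_eq]

lemma Pproj_apply (a : Fin 3) (s u : Fin 4 → Fin 2) :
    Pproj a s u = if s = u then (if s ∈ patS a then 1 else 0) else 0 := by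
  simp only [Pproj, Matrix.sum_apply, vecMulVec_apply, ket]
  rw [Finset.sum_congr rfl (fun p _ => by rw [ite_mul, one_mul, zero_mul]),
    Finset.sum_ite_eq]
  rcases eq_or_ne u s with rfl | h
  · simp
  · simp [h, Ne.symm h]

lemma Pproj_apply' (a : Fin 3) (s u : Fin 4 → Fin 2) :
    Pproj a s u = if s = u then (if u ∈ patS a then 1 else 0) else 0 := by
  rw [Pproj_apply]
  rcases eq_or_ne s u with rfl | h
  · simp
  · simp [h]

lemma had4_eq (s t : Fin 4 → Fin 2) :
    HadPow4 s t = (1/4 : ℂ) * ∏ i : Fin 4, (!![(1 : ℂ), 1; 1, -1]) (s i) (t i) := by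
  unfold HadPow4
  simp only [Matrix.smul_apply, smul_eq_mul, Finset.prod_mul_distrib, Finset.prod_const,
    Finset.card_univ, Fintype.card_fin]
  congr 1
  have h2 : (Real.sqrt 2 : ℝ) ^ 4 = 4 := by
    have := Real.sq_sqrt (by norm_num : (0:ℝ) ≤ 2)
    nlinarith [this]
  have h4 : ((1 / Real.sqrt 2 : ℝ) : ℂ) ^ 4 = 1/4 := by
    have hr : (1 / Real.sqrt 2 : ℝ) ^ 4 = 1/4 := by
      rw [div_pow, one_pow, h2]
    calc ((1 / Real.sqrt 2 : ℝ) : ℂ) ^ 4 = (((1 / Real.sqrt 2 : ℝ) ^ 4 : ℝ) : ℂ) := by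
          push_cast; ring
      _ = 1/4 := by rw [hr]; norm_num
  exact h4

lemma key (a b : Fin 3) (s t : Fin 4 → Fin 2) (hs : s ∈ patS a) (ht : t ∈ patS b) :
    HadPow4 s t = ((Mmat a b : ℝ) : ℂ) := by
  rw [had4_eq]
  fin_cases a <;> fin_cases b <;>
    simp only [patS, Finset.mem_insert, Finset.mem_singleton] at hs ht <;>
    rcases hs with rfl | rfl <;> rcases ht with rfl | rfl <;>
    norm_num [Fin.prod_univ_four, Mmat, Matrix.vecHead, Matrix.vecTail, Matrix.cons_val_two,
      Matrix.cons_val_three]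


/-- `P_a · Had^{⊗4} · P_b = M[a,b] · v_a v_b†` in the 16×16 complex matrices. -/
theorem stmt3 (a b : Fin 3) :
    Pproj a * HadPow4 * Pproj b
      = ((Mmat a b : ℝ) : ℂ) • Matrix.vecMulVec (vvec a) (star (vvec b)) := by
  ext s t
  rw [Matrix.mul_apply, Matrix.smul_apply, vecMulVec_apply]
  have step : ∀ w, (Pproj a * HadPow4) s w
      = (if s ∈ patS a then 1 else 0) * HadPow4 s w := by
    intro w
    rw [Matrix.mul_apply]
    simp [Pproj_apply, ite_mul, Finset.sum_ite_eq]
  simp only [step, Pproj_apply', vvec_apply, Pi.star_apply, mul_ite, mul_zero,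
    Finset.sum_ite_eq', Finset.mem_univ, if_true]
  by_cases hs : s ∈ patS a <;> by_cases ht : t ∈ patS b <;>
    simp [hs, ht, key a b s t]
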